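/- The Pareto front of the OneJumpZeroJump_SS problem equals the set {(c, n + 2k − c) : c ∈ ℤ, 2k ≤ c ≤ n} ∪ {(k, n + k), (n + k, k)} ∪ {(2k + 1/n, n − 1/n), (n − 1/n, 2k + 1/n)} ⊆ ℝ², and this set has exactly n − 2k + 5 elements. -/

import Mathlib

open Finset

/-- Number of 1-bits of a bit string `x ∈ {0,1}^n`. -/
def onesCount {n : ℕ} (x : Fin n → Bool) : ℕ :=
  (Finset.univ.filter fun i => x i = true).card

/-- First objective of the OneJumpZeroJump_SS problem with parameters `k`, `a`. -/
noncomputable def ojzjssF1 (n k a : ℕ) (x : Fin n → Bool) : ℝ :=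
  if onesCount x = k - a then 2 * (k : ℝ) + 1 / (n : ℝ)
  else if onesCount x = n - (k - a) then (n : ℝ) - 1 / (n : ℝ)
  else if onesCount x ≤ n - k ∨ x = fun _ => true then (k : ℝ) + onesCount x
  else (n : ℝ) - onesCount x

/-- Second objective of the OneJumpZeroJump_SS problem: `f₂(x) = f₁(x̄)`. -/
noncomputable def ojzjssF2 (n k a : ℕ) (x : Fin n → Bool) : ℝ :=
  ojzjssF1 n k a fun i => !(x i)

/-- `u` dominates `v` (for maximization of both coordinates). -/
def dominates (u v : ℝ × ℝ) : Prop := v.1 ≤ u.1 ∧ v.2 ≤ u.2 ∧ u ≠ v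

/-- `x` is Pareto optimal for OneJumpZeroJump_SS. -/
def ojzjssParetoOptimal (n k a : ℕ) (x : Fin n → Bool) : Prop :=
  ∀ y : Fin n → Bool,
    ¬ dominates (ojzjssF1 n k a y, ojzjssF2 n k a y) (ojzjssF1 n k a x, ojzjssF2 n k a x)

/-- The Pareto front of OneJumpZeroJump_SS: objective vectors of Pareto optimal solutions. -/
def ojzjssParetoFront (n k a : ℕ) : Set (ℝ × ℝ) :=
  {p | ∃ x : Fin n → Bool,
    ojzjssParetoOptimal n k a x ∧ (ojzjssF1 n k a x, ojzjssF2 n k a x) = p}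

/-- The claimed description of the Pareto front of OneJumpZeroJump_SS:
`{(c, n+2k−c) : c ∈ ℤ, 2k ≤ c ≤ n} ∪ {(k, n+k), (n+k, k)} ∪
{(2k + 1/n, n − 1/n), (n − 1/n, 2k + 1/n)}`. -/
def ojzjssFrontSet (n k : ℕ) : Set (ℝ × ℝ) :=
  {p | ∃ c : ℤ, 2 * (k : ℤ) ≤ c ∧ c ≤ (n : ℤ) ∧ p = ((c : ℝ), (n : ℝ) + 2 * k - c)} ∪
    {((k : ℝ), (n : ℝ) + k), ((n : ℝ) + k, (k : ℝ))} ∪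
    {(2 * (k : ℝ) + 1 / (n : ℝ), (n : ℝ) - 1 / (n : ℝ)),
      ((n : ℝ) - 1 / (n : ℝ), 2 * (k : ℝ) + 1 / (n : ℝ))}

section OCAux
variable {n k a m : ℕ}

lemma onesCount_le' (x : Fin n → Bool) : onesCount x ≤ n := by
  classical
  calc (Finset.univ.filter fun i => x i = true).card ≤ Finset.univ.card :=
        Finset.card_filter_le _ _
    _ = n := by simp

lemma onesCount_compl (x : Fin n → Bool) :
    onesCount (fun i => !(x i)) = n - onesCount x := by
  classical
  have h : (Finset.univ.filter fun i => (!(x i)) = true)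
      = Finset.univ \ (Finset.univ.filter fun i => x i = true) := by
    ext i; simp
  unfold onesCount
  rw [h, Finset.card_sdiff_of_subset (Finset.filter_subset _ _)]
  simp

lemma onesCount_eq_n_iff (x : Fin n → Bool) :
    onesCount x = n ↔ x = fun _ => true := by
  constructor
  · intro h
    have h2 : (Finset.univ.filter fun i => x i = true) = Finset.univ := by
      apply Finset.eq_univ_of_card
      simpa [onesCount] using h
    funext i
    have := Finset.mem_filter.mp (h2 ▸ Finset.mem_univ i)
    simpa using this.2
  · intro h; subst h; simp [onesCount]

lemma onesCount_top : onesCount (fun _ : Fin n => true) = n := by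
  simp [onesCount]

lemma onesCount_bot : onesCount (fun _ : Fin n => false) = 0 := by
  simp [onesCount]

lemma exists_onesCount (m : ℕ) (hm : m ≤ n) :
    ∃ x : Fin n → Bool, onesCount x = m := by
  classical
  refine ⟨fun i => decide (i.val < m), ?_⟩
  unfold onesCount
  simp only [decide_eq_true_eq]
  have h : ((univ.filter fun i : Fin n => ↑i < m).map Fin.valEmbedding) = Finset.range m := by
    ext j
    simp only [Finset.mem_map, Finset.mem_filter, Finset.mem_univ, true_and,
      Fin.valEmbedding_apply, Finset.mem_range]
    constructor
    · rintro ⟨i, hi, rfl⟩; exact hi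
    · intro hj; exact ⟨⟨j, lt_of_lt_of_le hj hm⟩, hj, rfl⟩
  have := congrArg Finset.card h
  simpa using this

end OCAux

/-- The objective values as a function of the number of ones. -/
noncomputable def ojzjssH (n k a m : ℕ) : ℝ :=
  if m = k - a then 2 * (k : ℝ) + 1 / (n : ℝ)
  else if m = n - (k - a) then (n : ℝ) - 1 / (n : ℝ)
  else if m ≤ n - k ∨ m = n then (k : ℝ) + m
  else (n : ℝ) - m

section HAux
variable {n k a m : ℕ}

lemma ojzjssH_eq1 (h : m = k - a) : ojzjssH n k a m = 2 * (k : ℝ) + 1 / n := by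
  unfold ojzjssH; rw [if_pos h]

lemma ojzjssH_eq2 (h1 : m ≠ k - a) (h : m = n - (k - a)) :
    ojzjssH n k a m = (n : ℝ) - 1 / n := by
  unfold ojzjssH; rw [if_neg h1, if_pos h]

lemma ojzjssH_eq3 (h1 : m ≠ k - a) (h2 : m ≠ n - (k - a)) (h : m ≤ n - k ∨ m = n) :
    ojzjssH n k a m = (k : ℝ) + m := by
  unfold ojzjssH; rw [if_neg h1, if_neg h2, if_pos h]

lemma ojzjssH_eq4 (h1 : m ≠ k - a) (h2 : m ≠ n - (k - a)) (h : ¬(m ≤ n - k ∨ m = n)) :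
    ojzjssH n k a m = (n : ℝ) - m := by
  unfold ojzjssH; rw [if_neg h1, if_neg h2, if_neg h]

lemma ojzjssF1_eq (x : Fin n → Bool) :
    ojzjssF1 n k a x = ojzjssH n k a (onesCount x) := by
  have hiff : (onesCount x ≤ n - k ∨ x = fun _ => true)
      ↔ (onesCount x ≤ n - k ∨ onesCount x = n) := by
    rw [onesCount_eq_n_iff]
  unfold ojzjssF1 ojzjssH
  simp only [hiff]

lemma ojzjssF2_eq (x : Fin n → Bool) :
    ojzjssF2 n k a x = ojzjssH n k a (n - onesCount x) := by
  unfold ojzjssF2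
  rw [ojzjssF1_eq, onesCount_compl]

end HAux

section Main
variable {n k a : ℕ}

lemma ojzjssH_sum_le (hk : 3 ≤ k) (hkn : 2 * k < n) (ha : 2 ≤ a) (hak : a < k)
    {m : ℕ} (hm : m ≤ n) :
    ojzjssH n k a m + ojzjssH n k a (n - m) ≤ (n : ℝ) + 2 * k := by
  have hn0 : 0 < n := by omega
  have hnR : (0 : ℝ) < n := by exact_mod_cast hn0
  have hip : (0 : ℝ) < 1 / n := by positivity
  have hil : (1 : ℝ) / n ≤ 1 := by
    rw [div_le_one hnR]; exact_mod_cast hn0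
  have hmR : ((n - m : ℕ) : ℝ) = (n : ℝ) - m := by
    push_cast [Nat.cast_sub hm]; ring
  have hreg : m = k - a ∨ m = n - (k - a)
      ∨ ((m ≤ n - k ∨ m = n) ∧ m ≠ k - a ∧ m ≠ n - (k - a))
      ∨ (¬(m ≤ n - k ∨ m = n) ∧ m ≠ k - a ∧ m ≠ n - (k - a)) := by
    omega
  rcases hreg with h | h | ⟨h3, h1, h2⟩ | ⟨h3, h1, h2⟩
  · rw [ojzjssH_eq1 h, ojzjssH_eq2 (by omega) (by omega)]
    linarith
  · rw [ojzjssH_eq2 (by omega) h, ojzjssH_eq1 (by omega)]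
    linarith
  · by_cases h4 : (n - m ≤ n - k ∨ n - m = n)
    · rw [ojzjssH_eq3 h1 h2 h3, ojzjssH_eq3 (by omega) (by omega) h4, hmR]
      linarith
    · rw [ojzjssH_eq3 h1 h2 h3, ojzjssH_eq4 (by omega) (by omega) h4, hmR]
      have hmk : 2 * m ≤ n + k := by omega
      have : 2 * (m : ℝ) ≤ (n : ℝ) + k := by exact_mod_cast hmk
      linarith
  · rw [ojzjssH_eq4 h1 h2 h3, ojzjssH_eq3 (by omega) (by omega) (by omega), hmR]
    have hmk : n ≤ 2 * m + k := by omega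
    have : (n : ℝ) ≤ 2 * (m : ℝ) + k := by exact_mod_cast hmk
    linarith

lemma ojzjss_sum_le (hk : 3 ≤ k) (hkn : 2 * k < n) (ha : 2 ≤ a) (hak : a < k)
    (y : Fin n → Bool) :
    ojzjssF1 n k a y + ojzjssF2 n k a y ≤ (n : ℝ) + 2 * k := by
  rw [ojzjssF1_eq, ojzjssF2_eq]
  exact ojzjssH_sum_le hk hkn ha hak (onesCount_le' y)

lemma pareto_of_sum (hk : 3 ≤ k) (hkn : 2 * k < n) (ha : 2 ≤ a) (hak : a < k)
    (x : Fin n → Bool)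
    (hx : ojzjssF1 n k a x + ojzjssF2 n k a x = (n : ℝ) + 2 * k) :
    ojzjssParetoOptimal n k a x := by
  intro y hdom
  obtain ⟨h1, h2, hne⟩ := hdom
  have h1' : ojzjssF1 n k a x ≤ ojzjssF1 n k a y := h1
  have h2' : ojzjssF2 n k a x ≤ ojzjssF2 n k a y := h2
  have hy := ojzjss_sum_le hk hkn ha hak y
  apply hne
  rw [Prod.mk.injEq]
  constructor <;> linarith

end Main
/-- The Pareto front of the OneJumpZeroJump_SS problem (with `3 ≤ k < n/2`, `2 ≤ a < k`)
equals `{(c, n+2k−c) : c ∈ ℤ, 2k ≤ c ≤ n} ∪ {(k, n+k), (n+k, k)} ∪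
{(2k + 1/n, n − 1/n), (n − 1/n, 2k + 1/n)}`, and this set has exactly `n − 2k + 5`
elements. -/
theorem ojzjss_pareto_front (n k a : ℕ) (hk : 3 ≤ k) (hkn : 2 * k < n)
    (ha : 2 ≤ a) (hak : a < k) :
    ojzjssParetoFront n k a = ojzjssFrontSet n k ∧
      (ojzjssFrontSet n k).ncard = n - 2 * k + 5 := by
  have hn0 : 0 < n := by omega
  have hnR : (0 : ℝ) < n := by exact_mod_cast hn0
  have hip : (0 : ℝ) < 1 / n := by positivity
  have hil : (1 : ℝ) / n < 1 := by
    rw [div_lt_one hnR]; exact_mod_cast (by omega : 1 < n)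
  constructor
  · ext p
    constructor
    · rintro ⟨x, hopt, rfl⟩
      have hmn := onesCount_le' (n := n) x
      obtain ⟨m, hm⟩ : ∃ m, onesCount x = m := ⟨_, rfl⟩
      rw [hm] at hmn
      have hcast : ((n - m : ℕ) : ℝ) = (n : ℝ) - m := by
        push_cast [Nat.cast_sub hmn]; ring
      simp only [ojzjssFrontSet, Set.mem_union, Set.mem_setOf_eq, Set.mem_insert_iff,
        Set.mem_singleton_iff]
      have hreg : m = 0 ∨ m = n ∨ m = k - a ∨ m = n - (k - a)
          ∨ (k ≤ m ∧ m ≤ n - k ∧ m ≠ k - a)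
          ∨ (0 < m ∧ m < k ∧ m ≠ k - a)
          ∨ (n - k < m ∧ m < n ∧ m ≠ n - (k - a)) := by omega
      rcases hreg with h | h | h | h | ⟨h1, h2, h3⟩ | ⟨h1, h2, h3⟩ | ⟨h1, h2, h3⟩
      · -- m = 0 : value (k, n+k)
        subst h
        refine Or.inl (Or.inr (Or.inl ?_))
        rw [ojzjssF1_eq, ojzjssF2_eq, hm, Nat.sub_zero,
          ojzjssH_eq3 (by omega) (by omega) (Or.inl (by omega)),
          ojzjssH_eq3 (by omega) (by omega) (Or.inr rfl)]
        rw [Prod.mk.injEq]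
        constructor <;> push_cast <;> ring
      · -- m = n : value (n+k, k)
        subst h
        refine Or.inl (Or.inr (Or.inr ?_))
        rw [ojzjssF1_eq, ojzjssF2_eq, hm, Nat.sub_self,
          ojzjssH_eq3 (by omega) (by omega) (Or.inr rfl),
          ojzjssH_eq3 (by omega) (by omega) (Or.inl (by omega))]
        rw [Prod.mk.injEq]
        constructor <;> push_cast <;> ring
      · -- m = k - a : value (2k + 1/n, n - 1/n)
        refine Or.inr (Or.inl ?_)
        rw [ojzjssF1_eq, ojzjssF2_eq, hm, ojzjssH_eq1 h,
          ojzjssH_eq2 (by omega) (by omega)]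
      · -- m = n - (k - a) : value (n - 1/n, 2k + 1/n)
        refine Or.inr (Or.inr ?_)
        rw [ojzjssF1_eq, ojzjssF2_eq, hm, ojzjssH_eq2 (by omega) h,
          show n - m = k - a by omega, ojzjssH_eq1 rfl]
      · -- k ≤ m ≤ n - k : value (k + m, n + k - m)
        refine Or.inl (Or.inl ⟨(k : ℤ) + m, by omega, by omega, ?_⟩)
        rw [ojzjssF1_eq, ojzjssF2_eq, hm,
          ojzjssH_eq3 (by omega) (by omega) (Or.inl h2),
          ojzjssH_eq3 (by omega) (by omega) (Or.inl (by omega)), hcast]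
        rw [Prod.mk.injEq]
        constructor <;> push_cast <;> ring
      · -- 0 < m < k : dominated by the all-ones string
        exfalso
        apply hopt (fun _ => true)
        have hy1 : ojzjssF1 n k a (fun _ => true) = (k : ℝ) + n := by
          rw [ojzjssF1_eq, onesCount_top, ojzjssH_eq3 (by omega) (by omega) (Or.inr rfl)]
        have hy2 : ojzjssF2 n k a (fun _ : Fin n => true) = (k : ℝ) := by
          rw [ojzjssF2_eq, onesCount_top, Nat.sub_self,
            ojzjssH_eq3 (by omega) (by omega) (Or.inl (by omega))]
          push_cast; ring
        have hx1 : ojzjssF1 n k a x = (k : ℝ) + m := by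
          rw [ojzjssF1_eq, hm, ojzjssH_eq3 h3 (by omega) (Or.inl (by omega))]
        have hx2 : ojzjssF2 n k a x = (m : ℝ) := by
          rw [ojzjssF2_eq, hm, ojzjssH_eq4 (by omega) (by omega) (by omega), hcast]
          ring
        have hmk : (m : ℝ) < k := by exact_mod_cast h2
        have hmn' : (m : ℝ) < n := by exact_mod_cast (by omega : m < n)
        refine ⟨?_, ?_, ?_⟩
        · show ojzjssF1 n k a x ≤ ojzjssF1 n k a (fun _ => true)
          rw [hx1, hy1]; linarith
        · show ojzjssF2 n k a x ≤ ojzjssF2 n k a (fun _ : Fin n => true)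
          rw [hx2, hy2]; linarith
        · intro hcontra
          rw [Prod.mk.injEq] at hcontra
          rw [hx1, hy1] at hcontra
          have := hcontra.1
          linarith
      · -- n - k < m < n : dominated by the all-zeros string
        exfalso
        apply hopt (fun _ => false)
        have hy1 : ojzjssF1 n k a (fun _ : Fin n => false) = (k : ℝ) := by
          rw [ojzjssF1_eq, onesCount_bot, ojzjssH_eq3 (by omega) (by omega) (Or.inl (by omega))]
          push_cast; ring
        have hy2 : ojzjssF2 n k a (fun _ : Fin n => false) = (k : ℝ) + n := by
          rw [ojzjssF2_eq, onesCount_bot, Nat.sub_zero,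
            ojzjssH_eq3 (by omega) (by omega) (Or.inr rfl)]
        have hx1 : ojzjssF1 n k a x = (n : ℝ) - m := by
          rw [ojzjssF1_eq, hm, ojzjssH_eq4 (by omega) h3 (by omega)]
        have hx2 : ojzjssF2 n k a x = (k : ℝ) + ((n : ℝ) - m) := by
          rw [ojzjssF2_eq, hm, ojzjssH_eq3 (by omega) (by omega) (Or.inl (by omega)), hcast]
        have hnmk : (n : ℝ) - m < k := by
          have : n - m < k := by omega
          rw [← hcast]; exact_mod_cast this
        have hm0 : (0 : ℝ) < m := by exact_mod_cast h1.trans_le' (by omega : 0 ≤ n - k) |>.trans_le (le_refl m)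
        refine ⟨?_, ?_, ?_⟩
        · show ojzjssF1 n k a x ≤ ojzjssF1 n k a (fun _ : Fin n => false)
          rw [hx1, hy1]; linarith
        · show ojzjssF2 n k a x ≤ ojzjssF2 n k a (fun _ : Fin n => false)
          rw [hx2, hy2]; linarith
        · intro hcontra
          rw [Prod.mk.injEq] at hcontra
          rw [hx1, hy1] at hcontra
          have := hcontra.1
          linarith
    · intro hp
      simp only [ojzjssFrontSet, Set.mem_union, Set.mem_setOf_eq, Set.mem_insert_iff,
        Set.mem_singleton_iff] at hp
      rcases hp with (⟨c, hc1, hc2, rfl⟩ | rfl | rfl) | (rfl | rfl)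
      · -- the line segment
        obtain ⟨m, hmdef⟩ : ∃ m : ℕ, (m : ℤ) = c - k := ⟨(c - k).toNat, by omega⟩
        obtain ⟨x, hx⟩ := exists_onesCount (n := n) m (by omega)
        have hcast : ((n - m : ℕ) : ℝ) = (n : ℝ) - m := by
          push_cast [Nat.cast_sub (show m ≤ n by omega)]; ring
        have hmR : (m : ℝ) = (c : ℝ) - k := by exact_mod_cast hmdef
        have hv1 : ojzjssF1 n k a x = (c : ℝ) := by
          rw [ojzjssF1_eq, hx, ojzjssH_eq3 (by omega) (by omega) (Or.inl (by omega))]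
          rw [hmR]; ring
        have hv2 : ojzjssF2 n k a x = (n : ℝ) + 2 * k - c := by
          rw [ojzjssF2_eq, hx, ojzjssH_eq3 (by omega) (by omega) (Or.inl (by omega)), hcast]
          rw [hmR]; ring
        exact ⟨x, pareto_of_sum hk hkn ha hak x (by rw [hv1, hv2]; ring),
          by rw [hv1, hv2]⟩
      · -- (k, n+k)
        refine ⟨fun _ => false, ?_, ?_⟩
        · apply pareto_of_sum hk hkn ha hak
          rw [ojzjssF1_eq, ojzjssF2_eq, onesCount_bot, Nat.sub_zero,
            ojzjssH_eq3 (by omega) (by omega) (Or.inl (by omega)),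
            ojzjssH_eq3 (by omega) (by omega) (Or.inr rfl)]
          push_cast; ring
        · rw [ojzjssF1_eq, ojzjssF2_eq, onesCount_bot, Nat.sub_zero,
            ojzjssH_eq3 (by omega) (by omega) (Or.inl (by omega)),
            ojzjssH_eq3 (by omega) (by omega) (Or.inr rfl)]
          rw [Prod.mk.injEq]
          constructor <;> push_cast <;> ring
      · -- (n+k, k)
        refine ⟨fun _ => true, ?_, ?_⟩
        · apply pareto_of_sum hk hkn ha hak
          rw [ojzjssF1_eq, ojzjssF2_eq, onesCount_top, Nat.sub_self,
            ojzjssH_eq3 (by omega) (by omega) (Or.inr rfl),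
            ojzjssH_eq3 (by omega) (by omega) (Or.inl (by omega))]
          push_cast; ring
        · rw [ojzjssF1_eq, ojzjssF2_eq, onesCount_top, Nat.sub_self,
            ojzjssH_eq3 (by omega) (by omega) (Or.inr rfl),
            ojzjssH_eq3 (by omega) (by omega) (Or.inl (by omega))]
          rw [Prod.mk.injEq]
          constructor <;> push_cast <;> ring
      · -- (2k + 1/n, n - 1/n)
        obtain ⟨x, hx⟩ := exists_onesCount (n := n) (k - a) (by omega)
        have hv1 : ojzjssF1 n k a x = 2 * (k : ℝ) + 1 / n := by
          rw [ojzjssF1_eq, hx, ojzjssH_eq1 rfl]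
        have hv2 : ojzjssF2 n k a x = (n : ℝ) - 1 / n := by
          rw [ojzjssF2_eq, hx, ojzjssH_eq2 (by omega) (by omega)]
        exact ⟨x, pareto_of_sum hk hkn ha hak x (by rw [hv1, hv2]; ring),
          by rw [hv1, hv2]⟩
      · -- (n - 1/n, 2k + 1/n)
        obtain ⟨x, hx⟩ := exists_onesCount (n := n) (n - (k - a)) (by omega)
        have hv1 : ojzjssF1 n k a x = (n : ℝ) - 1 / n := by
          rw [ojzjssF1_eq, hx, ojzjssH_eq2 (by omega) rfl]
        have hv2 : ojzjssF2 n k a x = 2 * (k : ℝ) + 1 / n := by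
          rw [ojzjssF2_eq, hx, show n - (n - (k - a)) = k - a by omega, ojzjssH_eq1 rfl]
        exact ⟨x, pareto_of_sum hk hkn ha hak x (by rw [hv1, hv2]; ring),
          by rw [hv1, hv2]⟩
  · -- cardinality
    have hkR : (3 : ℝ) ≤ k := by exact_mod_cast hk
    have hknR : 2 * (k : ℝ) + 1 ≤ n := by exact_mod_cast (by omega : 2 * k + 1 ≤ n)
    have hk1n : (k : ℝ) + 1 ≤ n := by exact_mod_cast (by omega : k + 1 ≤ n)
    have h2n : (2 : ℝ) / n < 1 := (div_lt_one hnR).mpr (by exact_mod_cast (by omega : 2 < n))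
    have h2inv : (1 : ℝ) / n + 1 / n = 2 / n := by ring
    set A : Set (ℝ × ℝ) :=
      {p | ∃ c : ℤ, 2 * (k : ℤ) ≤ c ∧ c ≤ (n : ℤ) ∧ p = ((c : ℝ), (n : ℝ) + 2 * k - c)}
      with hAdef
    set p1 : ℝ × ℝ := ((k : ℝ), (n : ℝ) + k) with hp1def
    set p2 : ℝ × ℝ := ((n : ℝ) + k, (k : ℝ)) with hp2def
    set q1 : ℝ × ℝ := (2 * (k : ℝ) + 1 / (n : ℝ), (n : ℝ) - 1 / (n : ℝ)) with hq1def
    set q2 : ℝ × ℝ := ((n : ℝ) - 1 / (n : ℝ), 2 * (k : ℝ) + 1 / (n : ℝ)) with hq2def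
    have hA : A = (fun c : ℤ => (((c : ℝ), (n : ℝ) + 2 * k - (c : ℝ)) : ℝ × ℝ)) ''
        (Set.Icc (2 * (k : ℤ)) (n : ℤ)) := by
      ext p
      constructor
      · rintro ⟨c, h1, h2, rfl⟩; exact ⟨c, Set.mem_Icc.mpr ⟨h1, h2⟩, rfl⟩
      · rintro ⟨c, hc, rfl⟩
        exact ⟨c, (Set.mem_Icc.mp hc).1, (Set.mem_Icc.mp hc).2, rfl⟩
    have hinj : Function.Injective (fun c : ℤ => (((c : ℝ), (n : ℝ) + 2 * k - (c : ℝ)) : ℝ × ℝ)) := by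
      intro c1 c2 h
      simp only [Prod.mk.injEq] at h
      exact_mod_cast h.1
    have hAfin : A.Finite := by
      rw [hA]; exact (Set.finite_Icc _ _).image _
    have hAncard : A.ncard = n - 2 * k + 1 := by
      rw [hA, Set.ncard_image_of_injective _ hinj, ← Finset.coe_Icc,
        Set.ncard_coe_finset, Int.card_Icc]
      omega
    have hp1A : p1 ∉ A := by
      rintro ⟨c, h1, h2, heq⟩
      rw [hp1def, Prod.mk.injEq] at heq
      have : (k : ℤ) = c := by exact_mod_cast heq.1
      omega
    have hp2A : p2 ∉ A := by
      rintro ⟨c, h1, h2, heq⟩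
      rw [hp2def, Prod.mk.injEq] at heq
      have : (n : ℤ) + k = c := by exact_mod_cast heq.1
      omega
    have hq1A : q1 ∉ A := by
      rintro ⟨c, h1, h2, heq⟩
      rw [hq1def, Prod.mk.injEq] at heq
      have hb1 : (2 * k : ℤ) < c := by
        have : ((2 * k : ℤ) : ℝ) < c := by push_cast; linarith [heq.1, hip]
        exact_mod_cast this
      have hb2 : c < (2 * k + 1 : ℤ) := by
        have : (c : ℝ) < ((2 * k + 1 : ℤ) : ℝ) := by push_cast; linarith [heq.1, hil]
        exact_mod_cast this
      omega
    have hq2A : q2 ∉ A := by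
      rintro ⟨c, h1, h2, heq⟩
      rw [hq2def, Prod.mk.injEq] at heq
      have hb1 : ((n : ℤ) - 1) < c := by
        have : (((n : ℤ) - 1) : ℝ) < c := by push_cast; linarith [heq.1, hil]
        exact_mod_cast this
      have hb2 : c < (n : ℤ) := by
        have : (c : ℝ) < ((n : ℤ) : ℝ) := by push_cast; linarith [heq.1, hip]
        exact_mod_cast this
      omega
    have hp12 : p1 ≠ p2 := by
      intro h
      rw [hp1def, hp2def, Prod.mk.injEq] at h
      linarith [h.1]
    have hq12 : q1 ≠ q2 := by
      intro h
      rw [hq1def, hq2def, Prod.mk.injEq] at h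
      have := h.1
      linarith
    have hq1p1 : q1 ≠ p1 := by
      intro h
      rw [hq1def, hp1def, Prod.mk.injEq] at h
      linarith [h.1, hip]
    have hq1p2 : q1 ≠ p2 := by
      intro h
      rw [hq1def, hp2def, Prod.mk.injEq] at h
      linarith [h.1, hil]
    have hq2p1 : q2 ≠ p1 := by
      intro h
      rw [hq2def, hp1def, Prod.mk.injEq] at h
      linarith [h.1, hil]
    have hq2p2 : q2 ≠ p2 := by
      intro h
      rw [hq2def, hp2def, Prod.mk.injEq] at h
      linarith [h.1, hip]
    have hBfin : ({p1, p2} : Set (ℝ × ℝ)).Finite :=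
      (Set.finite_singleton p2).insert p1
    have hCfin : ({q1, q2} : Set (ℝ × ℝ)).Finite :=
      (Set.finite_singleton q2).insert q1
    have hdisj1 : Disjoint A ({p1, p2} : Set (ℝ × ℝ)) := by
      rw [Set.disjoint_right]
      intro p hp
      simp only [Set.mem_insert_iff, Set.mem_singleton_iff] at hp
      rcases hp with rfl | rfl
      · exact hp1A
      · exact hp2A
    have hdisj2 : Disjoint (A ∪ ({p1, p2} : Set (ℝ × ℝ))) ({q1, q2} : Set (ℝ × ℝ)) := by
      rw [Set.disjoint_right]
      intro p hp
      simp only [Set.mem_insert_iff, Set.mem_singleton_iff] at hp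
      intro hmem
      rcases hmem with hmem | hmem
      · rcases hp with rfl | rfl
        · exact hq1A hmem
        · exact hq2A hmem
      · simp only [Set.mem_insert_iff, Set.mem_singleton_iff] at hmem
        rcases hp with rfl | rfl <;> rcases hmem with h | h
        · exact hq1p1 h
        · exact hq1p2 h
        · exact hq2p1 h
        · exact hq2p2 h
    show ((A ∪ ({p1, p2} : Set (ℝ × ℝ))) ∪ ({q1, q2} : Set (ℝ × ℝ))).ncard = n - 2 * k + 5
    rw [Set.ncard_union_eq hdisj2 (hAfin.union hBfin) hCfin,
      Set.ncard_union_eq hdisj1 hAfin hBfin, hAncard,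
      Set.ncard_pair hp12, Set.ncard_pair hq12]
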